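/- Let k and n be positive integers. The polynomial Φ_k(x^n) is irreducible over ℚ if and only if φ(nk) = n·φ(k), where φ is Euler's totient function. -/

import Mathlib

open Polynomial

theorem cyclo_dvd_comp (k n : ℕ) (hk : 0 < k) (hn : 0 < n) :
    cyclotomic (n * k) ℚ ∣ (cyclotomic k ℚ).comp (X ^ n) := by
  have hpos : 0 < n * k := mul_pos hn hk
  have hprim := Complex.isPrimitiveRoot_exp _ hpos.ne'
  rw [cyclotomic_eq_minpoly_rat hprim hpos, ← expand_eq_comp_X_pow]
  haveI := NeZero.of_pos hk
  refine minpoly.dvd ℚ _ ?_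
  rw [aeval_def, ← eval_map, map_expand, map_cyclotomic, expand_eval, ← IsRoot.def,
    @isRoot_cyclotomic_iff]
  exact IsPrimitiveRoot.pow hpos hprim rfl

theorem irreducible_cyclotomic_comp_X_pow_iff_totient
    (k n : ℕ) (hk : 0 < k) (hn : 0 < n) :
    Irreducible ((cyclotomic k ℚ).comp (X ^ n)) ↔
      Nat.totient (n * k) = n * Nat.totient k := by
  have hpos : 0 < n * k := mul_pos hn hk
  have hdvd := cyclo_dvd_comp k n hk hn
  have hmonic : ((cyclotomic k ℚ).comp (X ^ n)).Monic :=
    (cyclotomic.monic k ℚ).comp (monic_X_pow n) (by simp [hn.ne'])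
  have hdeg : ((cyclotomic k ℚ).comp (X ^ n)).natDegree = n * Nat.totient k := by
    rw [natDegree_comp, natDegree_cyclotomic, natDegree_X_pow, mul_comm]
  constructor
  · intro hirr
    obtain ⟨c, hc⟩ := hdvd
    rcases hirr.isUnit_or_isUnit hc with h | h
    · exact absurd h (cyclotomic.irreducible_rat hpos).not_isUnit
    · have : Associated (cyclotomic (n * k) ℚ) ((cyclotomic k ℚ).comp (X ^ n)) :=
        ⟨h.unit, by rw [IsUnit.unit_spec, ← hc]⟩
      have heq := eq_of_monic_of_associated (cyclotomic.monic _ ℚ) hmonic this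
      rw [← hdeg, ← heq, natDegree_cyclotomic]
  · intro htot
    have heq : (cyclotomic k ℚ).comp (X ^ n) = cyclotomic (n * k) ℚ := by
      refine eq_of_monic_of_dvd_of_natDegree_le (cyclotomic.monic _ ℚ) hmonic hdvd ?_
      rw [hdeg, natDegree_cyclotomic, htot]
    rw [heq]
    exact cyclotomic.irreducible_rat hpos
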